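/- Let (W_j)_{j∈ℕ} be a sequence of open subsets of ℂ, each containing the set 𝔻̄ ∪ [1,2] (closed unit disc together with the real interval [1,2]). Then there exists a sequence (φ_j)_{j∈ℕ} of holomorphic maps φ_j : 𝔻 → W_j such that (1) φ_j converges to the identity map of 𝔻 locally uniformly on 𝔻 as j → ∞, and (2) 2 ∈ φ_j(𝔻) for all j. -/

import Mathlib

open scoped Manifold Topology
open Set Metric Filter

noncomputable section

/-- The complex Euclidean space `ℂⁿ`. -/
abbrev CSpace (n : ℕ) : Type := EuclideanSpace ℂ (Fin n)

namespace Stmt4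

/-- Möbius map of the disc to the right half plane. -/
def mf (z : ℂ) : ℂ := (1 + z) / (1 - z)

def qf (T : ℝ) (z : ℂ) : ℂ := mf z / (mf z + T)

def pf (N : ℕ) (T : ℝ) (z : ℂ) : ℂ := Complex.exp ((N : ℂ)⁻¹ * Complex.log (qf T z))

def phi (δ T : ℝ) (N : ℕ) (z : ℂ) : ℂ :=
  z * Complex.exp ((Real.log (2 + δ/8) : ℂ) * pf N T z)

variable {z : ℂ} {T δ : ℝ} {N : ℕ}

lemma one_sub_ne (hz : ‖z‖ < 1) : (1 : ℂ) - z ≠ 0 := by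
  intro h
  have : z = 1 := by linear_combination -h
  simp [this] at hz

lemma one_add_ne (hz : ‖z‖ < 1) : (1 : ℂ) + z ≠ 0 := by
  intro h
  have : z = -1 := by linear_combination h
  simp [this] at hz

lemma mf_re_pos (hz : ‖z‖ < 1) : 0 < (mf z).re := by
  have h1 : Complex.normSq (1 - z) ≠ 0 := by
    simpa [Complex.normSq_eq_zero] using one_sub_ne hz
  have h2 : 0 < Complex.normSq (1 - z) := by
    rcases lt_or_eq_of_le (Complex.normSq_nonneg (1 - z)) with h | h
    · exact h
    · exact absurd h.symm h1
  have hz2 : z.re ^ 2 + z.im ^ 2 < 1 := by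
    nlinarith [hz, norm_nonneg z, Complex.sq_norm z, Complex.normSq_apply z]
  rw [mf, Complex.div_re]
  have : (1 + z).re * (1 - z).re + (1 + z).im * (1 - z).im
      = 1 - (z.re ^ 2 + z.im ^ 2) := by
    simp [Complex.add_re, Complex.sub_re, Complex.add_im, Complex.sub_im]; ring
  rw [← add_div, this]
  exact div_pos (by linarith) h2

lemma mf_ne (hz : ‖z‖ < 1) : mf z ≠ 0 :=
  div_ne_zero (one_add_ne hz) (one_sub_ne hz)

lemma mf_add_ne (hz : ‖z‖ < 1) (hT : 0 < T) : mf z + (T : ℂ) ≠ 0 := by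
  intro h
  have : (mf z + (T : ℂ)).re = 0 := by rw [h]; simp
  rw [Complex.add_re, Complex.ofReal_re] at this
  nlinarith [mf_re_pos hz]

lemma qf_ne (hz : ‖z‖ < 1) (hT : 0 < T) : qf T z ≠ 0 :=
  div_ne_zero (mf_ne hz) (mf_add_ne hz hT)

lemma qf_re_pos (hz : ‖z‖ < 1) (hT : 0 < T) : 0 < (qf T z).re := by
  have hm := mf_re_pos hz
  have hne := mf_add_ne hz hT
  have h2 : 0 < Complex.normSq (mf z + T) := by
    rcases lt_or_eq_of_le (Complex.normSq_nonneg (mf z + T)) with h | h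
    · exact h
    · exact absurd h.symm (by simpa [Complex.normSq_eq_zero] using hne)
  rw [qf, Complex.div_re, ← add_div]
  have : (mf z).re * (mf z + T).re + (mf z).im * (mf z + T).im
      = (mf z).re ^ 2 + T * (mf z).re + (mf z).im ^ 2 := by
    simp [Complex.add_re, Complex.add_im]; ring
  rw [this]
  positivity

lemma qf_abs_lt_one (hz : ‖z‖ < 1) (hT : 0 < T) : ‖qf T z‖ < 1 := by
  have hm := mf_re_pos hz
  have hne := mf_add_ne hz hT
  rw [qf, norm_div, div_lt_one (norm_pos_iff.mpr hne)]
  · have : Complex.normSq (mf z) < Complex.normSq (mf z + T) := by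
      simp only [Complex.normSq_apply, Complex.add_re, Complex.add_im, Complex.ofReal_re,
        Complex.ofReal_im]
      nlinarith
    have h1 := Complex.sq_norm (mf z)
    have h2 := Complex.sq_norm (mf z + T)
    nlinarith [norm_nonneg (mf z), norm_nonneg (mf z + T)]

lemma abs_mf_add_ge (hz : ‖z‖ < 1) (hT : 0 < T) : T ≤ ‖mf z + T‖ := by
  have hm := mf_re_pos hz
  have h2 := Complex.sq_norm (mf z + T)
  have : T ^ 2 ≤ Complex.normSq (mf z + T) := by
    simp only [Complex.normSq_apply, Complex.add_re, Complex.add_im, Complex.ofReal_re,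
      Complex.ofReal_im]
    nlinarith
  nlinarith [norm_nonneg (mf z + T)]

lemma qf_abs_le (hz : ‖z‖ < 1) (hT : 0 < T) :
    ‖qf T z‖ * (T * ‖1 - z‖) ≤ 2 := by
  have h1 : ‖mf z‖ ≤ 2 / ‖1 - z‖ := by
    rw [mf, norm_div, div_le_div_iff₀ (norm_pos_iff.mpr (one_sub_ne hz)) (norm_pos_iff.mpr (one_sub_ne hz))]
    have : ‖1 + z‖ ≤ 2 := by
      calc ‖1 + z‖ ≤ ‖1‖ + ‖z‖ := norm_add_le 1 z
        _ ≤ 2 := by simp; linarith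
    nlinarith [norm_nonneg (1 - z), norm_nonneg (1 + z)]
  have h2 := abs_mf_add_ge hz hT
  have h3 : ‖qf T z‖ ≤ ‖mf z‖ / T := by
    rw [qf, norm_div]
    exact div_le_div_of_nonneg_left (norm_nonneg _) hT h2
  have h0 := norm_pos_iff.mpr (one_sub_ne hz)
  calc ‖qf T z‖ * (T * ‖1 - z‖)
      ≤ (‖mf z‖ / T) * (T * ‖1 - z‖) := by
        apply mul_le_mul_of_nonneg_right h3; positivity
    _ = ‖mf z‖ * ‖1 - z‖ := by field_simp
    _ ≤ (2 / ‖1 - z‖) * ‖1 - z‖ := by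
        apply mul_le_mul_of_nonneg_right h1 (norm_nonneg _)
    _ = 2 := by field_simp

end Stmt4

namespace Stmt4
variable {z : ℂ} {T δ : ℝ} {N : ℕ}

lemma w_re (hz : ‖z‖ < 1) :
    ((N : ℂ)⁻¹ * Complex.log (qf T z)).re = (N : ℝ)⁻¹ * Real.log (‖qf T z‖) := by
  rw [show ((N : ℂ)⁻¹) = (((N : ℝ)⁻¹ : ℝ) : ℂ) by push_cast; ring,
    Complex.re_ofReal_mul, Complex.log_re]

lemma w_im (hz : ‖z‖ < 1) :
    ((N : ℂ)⁻¹ * Complex.log (qf T z)).im = (N : ℝ)⁻¹ * (qf T z).arg := by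
  rw [show ((N : ℂ)⁻¹) = (((N : ℝ)⁻¹ : ℝ) : ℂ) by push_cast; ring]
  rw [Complex.im_ofReal_mul, Complex.log_im]

lemma w_re_nonpos (hz : ‖z‖ < 1) (hT : 0 < T) :
    ((N : ℂ)⁻¹ * Complex.log (qf T z)).re ≤ 0 := by
  rw [w_re hz]
  have h1 : Real.log (‖qf T z‖) ≤ 0 :=
    Real.log_nonpos (norm_nonneg _) (qf_abs_lt_one hz hT).le
  have : (0:ℝ) ≤ (N : ℝ)⁻¹ := by positivity
  nlinarith

lemma w_im_abs (hz : ‖z‖ < 1) (hT : 0 < T) (hN : N ≠ 0) :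
    |((N : ℂ)⁻¹ * Complex.log (qf T z)).im| ≤ (N : ℝ)⁻¹ * (Real.pi / 2) := by
  rw [w_im hz, abs_mul]
  have h1 : |(qf T z).arg| ≤ Real.pi / 2 :=
    Complex.abs_arg_le_pi_div_two_iff.mpr (qf_re_pos hz hT).le
  have h2 : |((N : ℝ)⁻¹)| = (N : ℝ)⁻¹ := abs_of_nonneg (by positivity)
  rw [h2]
  exact mul_le_mul_of_nonneg_left h1 (by positivity)

lemma pf_abs (hz : ‖z‖ < 1) (hT : 0 < T) :
    ‖pf N T z‖ = ‖qf T z‖ ^ ((N : ℝ)⁻¹) := by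
  rw [pf, Complex.norm_exp, w_re hz,
    Real.rpow_def_of_pos (norm_pos_iff.mpr (qf_ne hz hT)), mul_comm]

lemma pf_abs_le_one (hz : ‖z‖ < 1) (hT : 0 < T) :
    ‖pf N T z‖ ≤ 1 := by
  rw [pf, Complex.norm_exp]
  exact Real.exp_le_one_iff.mpr (w_re_nonpos hz hT)

lemma pf_re_nonneg (hz : ‖z‖ < 1) (hT : 0 < T) (hN : N ≠ 0) :
    0 ≤ (pf N T z).re := by
  rw [pf, Complex.exp_re]
  have h1 := w_im_abs (T := T) hz hT hN
  have hNi : (N : ℝ)⁻¹ ≤ 1 := by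
    rw [inv_le_one_iff₀]
    right; exact_mod_cast Nat.one_le_iff_ne_zero.mpr hN
  have hpi : 0 < Real.pi / 2 := by positivity
  have h2 : (N : ℝ)⁻¹ * (Real.pi / 2) ≤ Real.pi / 2 := by nlinarith
  have := abs_le.mp (h1.trans h2)
  have hc : 0 ≤ Real.cos ((N : ℂ)⁻¹ * Complex.log (qf T z)).im :=
    Real.cos_nonneg_of_neg_pi_div_two_le_of_le this.1 this.2
  positivity

lemma pf_re_le_one (hz : ‖z‖ < 1) (hT : 0 < T) :
    (pf N T z).re ≤ 1 :=
  (Complex.re_le_norm _).trans (pf_abs_le_one hz hT)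

lemma pf_im_abs (hz : ‖z‖ < 1) (hT : 0 < T) (hN : N ≠ 0) :
    |(pf N T z).im| ≤ (N : ℝ)⁻¹ * (Real.pi / 2) := by
  rw [pf, Complex.exp_im, abs_mul]
  have h1 : |Real.exp ((N : ℂ)⁻¹ * Complex.log (qf T z)).re| ≤ 1 := by
    rw [abs_of_nonneg (Real.exp_nonneg _)]
    exact Real.exp_le_one_iff.mpr (w_re_nonpos hz hT)
  calc |Real.exp _| * |Real.sin ((N : ℂ)⁻¹ * Complex.log (qf T z)).im|
      ≤ 1 * |((N : ℂ)⁻¹ * Complex.log (qf T z)).im| := by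
        apply mul_le_mul h1 (Real.abs_sin_le_abs) (abs_nonneg _) zero_le_one
    _ ≤ (N : ℝ)⁻¹ * (Real.pi / 2) := by rw [one_mul]; exact w_im_abs hz hT hN

lemma pf_abs_le (hz : ‖z‖ < 1) (hT : 0 < T) (hN : N ≠ 0)
    {u : ℝ} (hu : 0 ≤ u) (hq : ‖qf T z‖ ≤ u ^ N) :
    ‖pf N T z‖ ≤ u := by
  rw [pf_abs hz hT]
  calc ‖qf T z‖ ^ ((N : ℝ)⁻¹) ≤ (u ^ N) ^ ((N : ℝ)⁻¹) :=
        Real.rpow_le_rpow (norm_nonneg _) hq (by positivity)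
    _ = u := Real.pow_rpow_inv_natCast hu hN

end Stmt4

namespace Stmt4

set_option maxHeartbeats 1000000 in
lemma phi_mem {δ T : ℝ} {N : ℕ} {z : ℂ} (hδ0 : 0 < δ) (hδ1 : δ ≤ 1)
    (hN : 100 ≤ (N : ℝ) * δ) (hT : 2 / ((δ/16) * (δ/16) ^ N) ≤ T)
    (hz : ‖z‖ < 1) :
    ∃ y ∈ closedBall (0 : ℂ) 1 ∪ (Complex.ofReal '' Icc (1 : ℝ) 2),
      dist (phi δ T N z) y < δ := by
  have hT0 : 0 < T := lt_of_lt_of_le (by positivity) hT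
  have hNR : (100 : ℝ) ≤ (N : ℝ) := by nlinarith [Nat.cast_nonneg (α := ℝ) N]
  have hNpos : (0 : ℝ) < N := by linarith
  have hNne : N ≠ 0 := by exact_mod_cast hNpos.ne'
  set L := Real.log (2 + δ/8) with hLdef
  have hB0 : (0 : ℝ) < 2 + δ/8 := by linarith
  have hL0 : 0 ≤ L := Real.log_nonneg (by linarith)
  have hL : L ≤ 9/8 := (Real.log_le_sub_one_of_pos hB0).trans (by linarith)
  set p := pf N T z with hpdef
  have hp_re0 : 0 ≤ p.re := pf_re_nonneg hz hT0 hNne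
  have hp_re1 : p.re ≤ 1 := pf_re_le_one hz hT0
  have hp_im : |p.im| ≤ (N : ℝ)⁻¹ * (Real.pi / 2) := pf_im_abs hz hT0 hNne
  have hpi4 : Real.pi ≤ 4 := Real.pi_le_four
  have hNinv : (N : ℝ)⁻¹ ≤ δ / 100 := by
    rw [inv_le_iff_one_le_mul₀ hNpos]
    nlinarith
  have hb : |L * p.im| ≤ 3 * (δ/100) := by
    rw [abs_mul, abs_of_nonneg hL0]
    have h2 : (N : ℝ)⁻¹ * (Real.pi / 2) ≤ (δ/100) * 2 := by
      have : (0:ℝ) < (N:ℝ)⁻¹ := by positivity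
      nlinarith
    nlinarith [abs_nonneg p.im]
  set a := L * p.re with hadef
  have ha0 : 0 ≤ a := mul_nonneg hL0 hp_re0
  have haL : a ≤ L := by nlinarith
  have hea : Real.exp a ≤ 2 + δ/8 := by
    rw [← Real.exp_log hB0]
    exact Real.exp_le_exp.mpr haL
  have hea1 : 1 ≤ Real.exp a := Real.one_le_exp ha0
  set P := z * (Real.exp a : ℂ) with hPdef
  -- decomposition
  have hsplit : phi δ T N z = P * Complex.exp ((L * p.im : ℝ) * Complex.I) := by
    rw [phi, hPdef]
    have h1 : ((L : ℂ) * p) = (a : ℂ) + ((L * p.im : ℝ) : ℂ) * Complex.I := by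
      apply Complex.ext <;>
        simp [hadef, Complex.re_ofReal_mul, Complex.im_ofReal_mul]
    rw [← hpdef, h1, Complex.exp_add, Complex.ofReal_exp]
    ring
  have habsP : ‖P‖ ≤ Real.exp a := by
    rw [hPdef, norm_mul, Complex.norm_real, Real.norm_eq_abs, abs_of_nonneg (Real.exp_nonneg _)]
    nlinarith [Real.exp_pos a, norm_nonneg z]
  have hdist1 : dist (phi δ T N z) P ≤ 13 * δ / 100 := by
    rw [hsplit, Complex.dist_eq]
    have h2 : P * Complex.exp ((L * p.im : ℝ) * Complex.I) - P
        = P * (Complex.exp ((L * p.im : ℝ) * Complex.I) - 1) := by ring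
    rw [h2, norm_mul]
    have habsb : ‖((L * p.im : ℝ) : ℂ) * Complex.I‖ = |L * p.im| := by
      rw [norm_mul, Complex.norm_I, Complex.norm_real, Real.norm_eq_abs, mul_one]
    have hble : ‖((L * p.im : ℝ) : ℂ) * Complex.I‖ ≤ 1 := by
      rw [habsb]; nlinarith
    have h3 := Complex.norm_exp_sub_one_le hble
    rw [habsb] at h3
    have h4 : ‖Complex.exp ((L * p.im : ℝ) * Complex.I) - 1‖
        ≤ 2 * (3 * (δ/100)) := h3.trans (by nlinarith)
    calc ‖P‖ * ‖Complex.exp ((L * p.im : ℝ) * Complex.I) - 1‖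
        ≤ (2 + δ/8) * (2 * (3 * (δ/100))) := by
          apply mul_le_mul (habsP.trans hea) h4 (norm_nonneg _) (by linarith)
      _ ≤ 13 * δ / 100 := by nlinarith [hδ0.le, hδ1]
  set eps := δ / 16 with hepsdef
  have heps0 : 0 < eps := by positivity
  by_cases hq : ‖qf T z‖ ≤ eps ^ N
  · -- z away from 1 : φ z is close to the closed disc
    have hpa : ‖p‖ ≤ eps := pf_abs_le hz hT0 hNne heps0.le hq
    have hare : a ≤ (9/8) * eps := by
      have := (Complex.re_le_norm p).trans hpa
      nlinarith
    have hea2 : Real.exp a ≤ 1 + δ/4 := by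
      have key : (1 - a) * Real.exp a ≤ 1 := by
        have h5 := Real.add_one_le_exp (-a)
        rw [Real.exp_neg] at h5
        have h6 := Real.exp_pos a
        have h7 : (1 - a) ≤ (Real.exp a)⁻¹ := by linarith
        calc (1 - a) * Real.exp a ≤ (Real.exp a)⁻¹ * Real.exp a := by nlinarith
          _ = 1 := by field_simp
      nlinarith [Real.exp_pos a]
    by_cases hP : ‖P‖ ≤ 1
    · refine ⟨P, Or.inl ?_, ?_⟩
      · simpa [Complex.dist_eq] using hP
      · calc dist (phi δ T N z) P ≤ 13 * δ / 100 := hdist1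
          _ < δ := by linarith
    · push_neg at hP
      set r := ‖P‖ with hrdef
      refine ⟨((r⁻¹ : ℝ) : ℂ) * P, Or.inl ?_, ?_⟩
      · have : ‖((r⁻¹ : ℝ) : ℂ) * P‖ = 1 := by
          rw [norm_mul, Complex.norm_real, Real.norm_eq_abs, abs_of_nonneg (inv_nonneg.mpr (by linarith : (0:ℝ) ≤ r))]
          field_simp
          exact hrdef.symm
        simp only [mem_closedBall, Complex.dist_eq, sub_zero]
        rw [this]
      · have hPy : dist P (((r⁻¹ : ℝ) : ℂ) * P) = r - 1 := by
          rw [Complex.dist_eq]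
          have h8 : P - ((r⁻¹ : ℝ) : ℂ) * P = ((1 - r⁻¹ : ℝ) : ℂ) * P := by
            push_cast; ring
          rw [h8, norm_mul, Complex.norm_real, Real.norm_eq_abs, ← hrdef,
            abs_of_nonneg (by rw [sub_nonneg, inv_le_one_iff₀]; right; linarith)]
          field_simp
        have hr2 : r ≤ 1 + δ/4 := habsP.trans hea2
        calc dist (phi δ T N z) (((r⁻¹ : ℝ) : ℂ) * P)
            ≤ dist (phi δ T N z) P + dist P (((r⁻¹ : ℝ) : ℂ) * P) := dist_triangle _ _ _
          _ ≤ 13 * δ / 100 + (r - 1) := by rw [hPy]; linarith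
          _ < δ := by linarith
  · -- z is near 1 : φ z is close to the segment [1,2]
    push_neg at hq
    have hqle := qf_abs_le hz hT0
    have hTe : 2 ≤ T * (eps * eps ^ N) := by
      rw [div_le_iff₀ (by positivity)] at hT
      linarith
    have h1z : ‖1 - z‖ < eps := by
      by_contra hcon
      push_neg at hcon
      have hp1 : (0:ℝ) < eps ^ N := by positivity
      have hTB : 0 < T * ‖1 - z‖ :=
        mul_pos hT0 (norm_pos_iff.mpr (one_sub_ne hz))
      have k1 : eps ^ N * (T * ‖1 - z‖)
          < ‖qf T z‖ * (T * ‖1 - z‖) :=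
        mul_lt_mul_of_pos_right hq hTB
      have k2 : eps ^ N * (T * eps) ≤ eps ^ N * (T * ‖1 - z‖) := by
        have : T * eps ≤ T * ‖1 - z‖ := by nlinarith
        nlinarith
      have k3 : eps ^ N * (T * eps) = T * (eps * eps ^ N) := by ring
      linarith
    have hzre : 1 - eps ≤ z.re := by
      have := Complex.abs_re_le_norm (1 - z)
      simp only [Complex.sub_re, Complex.one_re] at this
      have := abs_le.mp this
      linarith [h1z.le, (abs_le.mp ((Complex.abs_re_le_norm (1-z)).trans_lt h1z).le).1]
    have hzim : |z.im| ≤ eps := by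
      have h9 := (Complex.abs_im_le_norm (1 - z)).trans h1z.le
      simp only [Complex.sub_im, Complex.one_im, zero_sub, abs_neg] at h9
      exact h9
    have hPre : P.re = z.re * Real.exp a := by
      rw [hPdef, Complex.mul_re]
      simp only [Complex.ofReal_re, Complex.ofReal_im, mul_zero, sub_zero]
    have hPim : P.im = z.im * Real.exp a := by
      rw [hPdef, Complex.mul_im]
      simp only [Complex.ofReal_re, Complex.ofReal_im, mul_zero, zero_add]
    have hzre1 : z.re ≤ 1 := by
      have := Complex.abs_re_le_norm z
      have := abs_le.mp ((Complex.abs_re_le_norm z).trans hz.le)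
      linarith
    have heps1 : eps ≤ 1/16 := by rw [hepsdef]; linarith
    have hPre1 : 1 - eps ≤ P.re := by
      rw [hPre]
      nlinarith
    have hPre2 : P.re ≤ 2 + δ/8 := by
      rw [hPre]
      nlinarith [Real.exp_pos a]
    have hPim2 : |P.im| ≤ 3 * eps := by
      rw [hPim, abs_mul, abs_of_nonneg (Real.exp_nonneg a)]
      nlinarith [abs_nonneg z.im]
    set c := max 1 (min 2 P.re) with hcdef
    have hc12 : c ∈ Icc (1:ℝ) 2 := by
      constructor
      · exact le_max_left _ _
      · rw [hcdef, max_le_iff]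
        exact ⟨by norm_num, min_le_left _ _⟩
    have hcre : |P.re - c| ≤ δ/8 := by
      rcases le_total P.re 1 with h | h
      · have : c = 1 := by
          rw [hcdef, min_eq_right (by linarith), max_eq_left h]
        rw [this, abs_le]
        constructor <;> [linarith [hepsdef ▸ hPre1]; linarith]
      · rcases le_total P.re 2 with h2 | h2
        · have : c = P.re := by rw [hcdef, min_eq_right h2, max_eq_right h]
          rw [this]; simp; linarith
        · have : c = 2 := by
            rw [hcdef, min_eq_left h2, max_eq_right (by norm_num : (1:ℝ) ≤ 2)]
          rw [this, abs_le]; constructor <;> linarith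
    refine ⟨(c : ℂ), Or.inr ⟨c, hc12, rfl⟩, ?_⟩
    have hPy : dist P (c : ℂ) ≤ δ/8 + 3 * eps := by
      rw [Complex.dist_eq]
      calc ‖P - (c:ℂ)‖ ≤ |(P - (c:ℂ)).re| + |(P - (c:ℂ)).im| :=
            Complex.norm_le_abs_re_add_abs_im _
        _ ≤ δ/8 + 3 * eps := by
            simp only [Complex.sub_re, Complex.sub_im, Complex.ofReal_re, Complex.ofReal_im,
              sub_zero]
            exact add_le_add hcre hPim2
    calc dist (phi δ T N z) (c : ℂ)
        ≤ dist (phi δ T N z) P + dist P (c : ℂ) := dist_triangle _ _ _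
      _ ≤ 13 * δ / 100 + (δ/8 + 3 * eps) := by linarith
      _ < δ := by rw [hepsdef]; linarith

end Stmt4

namespace Stmt4

lemma mem_ball_iff {z : ℂ} : z ∈ ball (0 : ℂ) 1 ↔ ‖z‖ < 1 := by
  rw [mem_ball_zero_iff]

lemma phi_diff {δ T : ℝ} {N : ℕ} (hT0 : 0 < T) :
    DifferentiableOn ℂ (phi δ T N) (ball (0 : ℂ) 1) := by
  have hmf : DifferentiableOn ℂ mf (ball (0:ℂ) 1) := by
    apply DifferentiableOn.div (by fun_prop) (by fun_prop)
    exact fun z hz => one_sub_ne (mem_ball_iff.mp hz)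
  have hqf : DifferentiableOn ℂ (qf T) (ball (0:ℂ) 1) := by
    apply hmf.div (hmf.add (differentiableOn_const _))
    exact fun z hz => mf_add_ne (mem_ball_iff.mp hz) hT0
  have hlog : DifferentiableOn ℂ (fun z => Complex.log (qf T z)) (ball (0:ℂ) 1) := by
    apply hqf.clog
    intro z hz
    exact Complex.mem_slitPlane_iff.mpr (Or.inl (qf_re_pos (mem_ball_iff.mp hz) hT0))
  have hpf : DifferentiableOn ℂ (pf N T) (ball (0:ℂ) 1) :=
    (hlog.const_mul _).cexp
  exact differentiableOn_id.mul ((hpf.const_mul _).cexp)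

/-- Real version of `phi` on the real interval `[0,1)`. -/
def F (δ T : ℝ) (N : ℕ) (t : ℝ) : ℝ :=
  t * Real.exp (Real.log (2 + δ/8) *
    Real.exp ((N : ℝ)⁻¹ * Real.log ((1+t)/(1-t) / ((1+t)/(1-t) + T))))

lemma phi_real {δ T : ℝ} {N : ℕ} {t : ℝ} (ht0 : 0 ≤ t) (ht1 : t < 1) (hT0 : 0 < T) :
    phi δ T N (t : ℂ) = ((F δ T N t : ℝ) : ℂ) := by
  have h1t : (0:ℝ) < 1 - t := by linarith
  set m : ℝ := (1+t)/(1-t) with hm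
  have hm0 : 0 < m := by rw [hm]; positivity
  have hq0 : 0 < m / (m + T) := by positivity
  have e1 : mf (t:ℂ) = ((m : ℝ) : ℂ) := by rw [mf, hm]; push_cast; ring
  have e2 : qf T (t:ℂ) = ((m/(m+T) : ℝ) : ℂ) := by rw [qf, e1]; push_cast; ring
  rw [phi, pf, e2, ← Complex.ofReal_log hq0.le,
    show (N:ℂ)⁻¹ * ((Real.log (m/(m+T)) : ℝ) : ℂ)
        = ((((N:ℝ)⁻¹ * Real.log (m/(m+T))) : ℝ) : ℂ) by push_cast; ring,
    ← Complex.ofReal_exp,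
    show ((Real.log (2+δ/8) : ℝ) : ℂ) * ((Real.exp ((N:ℝ)⁻¹ * Real.log (m/(m+T))) : ℝ) : ℂ)
        = (((Real.log (2+δ/8) * Real.exp ((N:ℝ)⁻¹ * Real.log (m/(m+T)))) : ℝ) : ℂ) by
      push_cast; ring,
    ← Complex.ofReal_exp, F]
  push_cast
  ring

lemma F_zero {δ T : ℝ} {N : ℕ} : F δ T N 0 = 0 := by simp [F]

set_option maxHeartbeats 1000000 in
lemma F_big {δ T : ℝ} {N : ℕ} (hδ0 : 0 < δ) (hδ1 : δ ≤ 1) (hT0 : 0 < T) (hN : N ≠ 0) :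
    ∃ x : ℝ, 0 ≤ x ∧ x < 1 ∧ 2 ≤ F δ T N x := by
  set γ : ℝ := δ/100 with hγ
  have hγ0 : 0 < γ := by positivity
  have hγ1 : γ ≤ 1/100 := by rw [hγ]; linarith
  set x : ℝ := 1 - γ/(T+1) with hx
  have hg0 : 0 < γ/(T+1) := by positivity
  have hgγ : γ/(T+1) ≤ γ := by
    apply div_le_self hγ0.le; linarith
  have hx0 : 0 ≤ x := by rw [hx]; linarith
  have hx1 : x < 1 := by rw [hx]; linarith
  have h1x : 1 - x = γ/(T+1) := by rw [hx]; ring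
  have h1x0 : 0 < 1 - x := by rw [h1x]; exact hg0
  refine ⟨x, hx0, hx1, ?_⟩
  set m : ℝ := (1+x)/(1-x) with hm
  have hm0 : 0 < m := by rw [hm]; positivity
  have hmT : 0 < m + T := by linarith
  set q : ℝ := m / (m + T) with hq
  have hq0 : 0 < q := by rw [hq]; positivity
  have hq1 : q ≤ 1 := by
    rw [hq, div_le_one hmT]; linarith
  have hγm : γ * m = (1 + x) * (T + 1) := by
    rw [hm, h1x]
    field_simp
  have hqγ : 1 - γ ≤ q := by
    rw [hq, le_div_iff₀ hmT]
    nlinarith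
  -- the inner exponential is at least q
  have hlogq : Real.log q ≤ 0 := Real.log_nonpos hq0.le hq1
  have hNi : (N:ℝ)⁻¹ ≤ 1 := by
    rw [inv_le_one_iff₀]; right
    exact_mod_cast Nat.one_le_iff_ne_zero.mpr hN
  have hNi0 : 0 ≤ (N:ℝ)⁻¹ := by positivity
  have hinner : q ≤ Real.exp ((N:ℝ)⁻¹ * Real.log q) := by
    calc q = Real.exp (Real.log q) := (Real.exp_log hq0).symm
      _ ≤ Real.exp ((N:ℝ)⁻¹ * Real.log q) := by
          apply Real.exp_le_exp.mpr; nlinarith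
  set L : ℝ := Real.log (2 + δ/8) with hL
  have hB0 : (0:ℝ) < 2 + δ/8 := by linarith
  have hL0 : 0 ≤ L := Real.log_nonneg (by linarith)
  have hL9 : L ≤ 9/8 := (Real.log_le_sub_one_of_pos hB0).trans (by linarith)
  have houter : Real.exp (L * (1 - γ)) ≤ Real.exp (L * Real.exp ((N:ℝ)⁻¹ * Real.log q)) := by
    apply Real.exp_le_exp.mpr
    have : 1 - γ ≤ Real.exp ((N:ℝ)⁻¹ * Real.log q) := le_trans hqγ hinner
    nlinarith
  have hexp1 : (2 + δ/8) * (1 - L * γ) ≤ Real.exp (L * (1 - γ)) := by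
    have h5 : 1 - L * γ ≤ Real.exp (-(L * γ)) := by
      have := Real.add_one_le_exp (-(L*γ)); linarith
    have h6 : Real.exp (L * (1-γ)) = (2 + δ/8) * Real.exp (-(L*γ)) := by
      rw [show L * (1-γ) = L + (-(L*γ)) by ring, Real.exp_add, Real.exp_log hB0]
    rw [h6]
    nlinarith [Real.exp_pos (-(L*γ))]
  have hxγ : 1 - γ ≤ x := by rw [hx]; linarith
  have hF : F δ T N x = x * Real.exp (L * Real.exp ((N:ℝ)⁻¹ * Real.log q)) := by
    rw [F, hL, hq, hm]
  rw [hF]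
  have hLγ : L * γ ≤ 9 * δ / 800 := by
    have : L * γ ≤ (9/8) * γ := mul_le_mul_of_nonneg_right hL9 hγ0.le
    rw [hγ] at this ⊢
    linarith
  have hP0 : 0 ≤ L * γ := mul_nonneg hL0 hγ0.le
  have hchain : (1 - γ) * ((2 + δ/8) * (1 - L * γ)) ≤
      x * Real.exp (L * Real.exp ((N:ℝ)⁻¹ * Real.log q)) := by
    have h7 : (0:ℝ) ≤ (2 + δ/8) * (1 - L * γ) := by nlinarith
    have h8 : (1 - γ) * ((2 + δ/8) * (1 - L * γ)) ≤ x * ((2 + δ/8) * (1 - L * γ)) :=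
      mul_le_mul_of_nonneg_right hxγ h7
    have h9 : x * ((2 + δ/8) * (1 - L * γ)) ≤ x * Real.exp (L * (1-γ)) :=
      mul_le_mul_of_nonneg_left hexp1 hx0
    have h10 : x * Real.exp (L * (1-γ)) ≤ x * Real.exp (L * Real.exp ((N:ℝ)⁻¹ * Real.log q)) :=
      mul_le_mul_of_nonneg_left houter hx0
    linarith
  have hnum : (2:ℝ) ≤ (1 - γ) * ((2 + δ/8) * (1 - L * γ)) := by
    have e1 : γ = δ/100 := hγ
    have s1 : 2 + δ/8 - (17/8) * (9 * δ / 800) ≤ (2 + δ/8) * (1 - L * γ) := by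
      nlinarith [hP0, hLγ, hδ1, hδ0]
    have s2 : (0:ℝ) ≤ (2 + δ/8) * (1 - L * γ) := by nlinarith [hδ0, hδ1]
    have s4 : (2 + δ/8) * (1 - L * γ) ≤ 17/8 := by nlinarith [hδ0, hδ1, hP0]
    nlinarith [s1, s4, mul_le_mul_of_nonneg_left s4 hγ0.le, hγ0, hδ0, e1]
  linarith

lemma F_cont {δ T : ℝ} {N : ℕ} (hT0 : 0 < T) {x : ℝ} (hx : x < 1) :
    ContinuousOn (F δ T N) (Icc 0 x) := by
  have hden : ∀ t ∈ Icc (0:ℝ) x, 1 - t ≠ 0 := by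
    intro t ht; have := ht.2; intro h; linarith [hx]
  have h1 : ContinuousOn (fun t : ℝ => (1+t)/(1-t)) (Icc 0 x) :=
    ContinuousOn.div (by fun_prop) (by fun_prop) hden
  have hmpos : ∀ t ∈ Icc (0:ℝ) x, 0 < (1+t)/(1-t) := by
    intro t ht
    have h2 := ht.1; have h3 := ht.2
    have : 0 < 1 - t := by linarith
    positivity
  have h2 : ContinuousOn (fun t : ℝ => (1+t)/(1-t) / ((1+t)/(1-t) + T)) (Icc 0 x) := by
    apply h1.div (h1.add continuousOn_const)
    intro t ht
    have := hmpos t ht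
    exact (by linarith : (0:ℝ) < (1+t)/(1-t) + T).ne'
  have h3 : ContinuousOn (fun t : ℝ => Real.log ((1+t)/(1-t) / ((1+t)/(1-t) + T)))
      (Icc 0 x) := by
    apply ContinuousOn.log h2
    intro t ht
    have h4 := hmpos t ht
    have : 0 < (1+t)/(1-t) / ((1+t)/(1-t) + T) := by positivity
    exact this.ne'
  apply ContinuousOn.mul continuousOn_id
  apply Real.continuous_exp.comp_continuousOn
  apply ContinuousOn.mul continuousOn_const
  apply Real.continuous_exp.comp_continuousOn
  exact ContinuousOn.mul continuousOn_const h3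

lemma phi_two {δ T : ℝ} {N : ℕ} (hδ0 : 0 < δ) (hδ1 : δ ≤ 1) (hT0 : 0 < T) (hN : N ≠ 0) :
    ∃ w ∈ ball (0 : ℂ) 1, phi δ T N w = 2 := by
  obtain ⟨x, hx0, hx1, hFx⟩ := F_big (T := T) hδ0 hδ1 hT0 hN
  have h2 : (2:ℝ) ∈ Icc (F δ T N 0) (F δ T N x) := by
    rw [F_zero]; exact ⟨by norm_num, hFx⟩
  obtain ⟨c, hc, hFc⟩ := intermediate_value_Icc hx0 (F_cont hT0 hx1) h2
  refine ⟨(c : ℂ), ?_, ?_⟩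
  · rw [mem_ball_iff, Complex.norm_real, Real.norm_eq_abs, abs_of_nonneg hc.1]
    exact lt_of_le_of_lt hc.2 hx1
  · rw [phi_real hc.1 (lt_of_le_of_lt hc.2 hx1) hT0, hFc]
    norm_num

lemma qf_small {T : ℝ} {N : ℕ} {z : ℂ} (hz : ‖z‖ < 1) {s u : ℝ}
    (hs : 0 < s) (hu : 0 < u) (hzs : ‖z‖ ≤ 1 - s)
    (hT : 2 / (s * u ^ N) ≤ T) :
    ‖qf T z‖ ≤ u ^ N := by
  have hT0 : 0 < T := lt_of_lt_of_le (by positivity) hT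
  have h1 : s ≤ ‖1 - z‖ := by
    have h := norm_add_le (1 - z) z
    simp only [sub_add_cancel, norm_one] at h
    linarith
  have hqle := qf_abs_le hz hT0
  have hTe : 2 ≤ T * (s * u ^ N) := by
    rw [div_le_iff₀ (by positivity)] at hT
    linarith
  have hq0 : 0 ≤ ‖qf T z‖ := norm_nonneg _
  have hup : (0:ℝ) < u ^ N := by positivity
  have k2 : ‖qf T z‖ * (T * s) ≤ ‖qf T z‖ * (T * ‖1 - z‖) := by
    have : T * s ≤ T * ‖1 - z‖ := by nlinarith
    nlinarith
  have hTs : 0 < T * s := by positivity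
  have k3 : ‖qf T z‖ * (T * s) ≤ T * (s * u ^ N) := by nlinarith
  rw [show T * (s * u ^ N) = (T * s) * u ^ N by ring] at k3
  exact le_of_mul_le_mul_right (by nlinarith) hTs

lemma phi_dist {δ T : ℝ} {N : ℕ} {z : ℂ} (hδ0 : 0 < δ) (hδ1 : δ ≤ 1)
    (hz : ‖z‖ < 1) (hT0 : 0 < T) {u : ℝ} (hu0 : 0 < u) (hu2 : u ≤ 1/2)
    (hq : ‖qf T z‖ ≤ u ^ N) (hN : N ≠ 0) :
    dist (phi δ T N z) z ≤ 3 * u := by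
  set L : ℝ := Real.log (2 + δ/8) with hL
  have hB0 : (0:ℝ) < 2 + δ/8 := by linarith
  have hL0 : 0 ≤ L := Real.log_nonneg (by linarith)
  have hL9 : L ≤ 9/8 := (Real.log_le_sub_one_of_pos hB0).trans (by linarith)
  have hpu : ‖pf N T z‖ ≤ u := pf_abs_le hz hT0 hN hu0.le hq
  have hLp : ‖(L : ℂ) * pf N T z‖ ≤ (9/8) * u := by
    rw [norm_mul, Complex.norm_real, Real.norm_eq_abs, abs_of_nonneg hL0]
    nlinarith [norm_nonneg (pf N T z)]
  have hLp1 : ‖(L : ℂ) * pf N T z‖ ≤ 1 := by nlinarith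
  have h3 := Complex.norm_exp_sub_one_le hLp1
  rw [Complex.dist_eq, phi]
  have h4 : z * Complex.exp ((L:ℂ) * pf N T z) - z
      = z * (Complex.exp ((L:ℂ) * pf N T z) - 1) := by ring
  rw [h4, norm_mul]
  calc ‖z‖ * ‖Complex.exp ((L:ℂ) * pf N T z) - 1‖
      ≤ 1 * (2 * ((9/8) * u)) := by
        apply mul_le_mul hz.le (h3.trans (by nlinarith)) (norm_nonneg _) zero_le_one
    _ ≤ 3 * u := by nlinarith

end Stmt4

open Stmt4 in
/-- Given open sets `W j ⊆ ℂ` containing `𝔻̄ ∪ [1,2]`, there are holomorphic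
discs `φ j : 𝔻 → W j` converging locally uniformly on `𝔻` to the identity and with `2 ∈ φ j (𝔻)`
for all `j`. -/

theorem stmt_4 (W : ℕ → Set ℂ) (hWopen : ∀ j, IsOpen (W j))
    (hW : ∀ j, Metric.closedBall (0 : ℂ) 1 ∪ (Complex.ofReal '' Set.Icc (1 : ℝ) 2) ⊆ W j) :
    ∃ φ : ℕ → ℂ → ℂ,
      (∀ j, DifferentiableOn ℂ (φ j) (Metric.ball (0 : ℂ) 1)) ∧
      (∀ j, Set.MapsTo (φ j) (Metric.ball (0 : ℂ) 1) (W j)) ∧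
      TendstoLocallyUniformlyOn (fun j => φ j) id Filter.atTop (Metric.ball (0 : ℂ) 1) ∧
      (∀ j, (2 : ℂ) ∈ φ j '' Metric.ball (0 : ℂ) 1) := by
  set K : Set ℂ := Metric.closedBall (0 : ℂ) 1 ∪ (Complex.ofReal '' Set.Icc (1 : ℝ) 2) with hK
  have hKc : IsCompact K :=
    (isCompact_closedBall _ _).union (isCompact_Icc.image Complex.continuous_ofReal)
  have hthick := fun j => hKc.exists_thickening_subset_open (hWopen j) (hW j)
  choose δ' hδ'pos hδ'sub using hthick
  set d : ℕ → ℝ := fun j => min (δ' j) 1 with hd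
  have hd0 : ∀ j, 0 < d j := fun j => lt_min (hδ'pos j) one_pos
  have hd1 : ∀ j, d j ≤ 1 := fun j => min_le_right _ _
  have hdsub : ∀ j, Metric.thickening (d j) K ⊆ W j := fun j =>
    (Metric.thickening_mono (min_le_left _ _) K).trans (hδ'sub j)
  set Nn : ℕ → ℕ := fun j => ⌈(100:ℝ) / d j⌉₊ with hNn
  have hNd : ∀ j, 100 ≤ (Nn j : ℝ) * d j := by
    intro j
    have h1 : (100:ℝ) / d j ≤ (Nn j : ℝ) := Nat.le_ceil _
    rw [div_le_iff₀ (hd0 j)] at h1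
    linarith
  have hNne : ∀ j, Nn j ≠ 0 := by
    intro j
    have := hNd j
    intro h
    rw [h] at this
    simp at this
    nlinarith [hd0 j, hd1 j]
  set u : ℕ → ℝ := fun j => 1 / (3 * ((j:ℝ) + 1)) with hu
  have hu0 : ∀ j, 0 < u j := fun j => by positivity
  have hu2 : ∀ j, u j ≤ 1/2 := by
    intro j
    rw [hu]
    simp only
    rw [div_le_div_iff₀ (by positivity) (by norm_num)]
    nlinarith [Nat.cast_nonneg (α := ℝ) j]
  set s : ℕ → ℝ := fun j => 1 / ((j:ℝ) + 1) with hs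
  have hs0 : ∀ j, 0 < s j := fun j => by positivity
  set T : ℕ → ℝ := fun j =>
    max (2 / ((d j/16) * (d j/16) ^ (Nn j))) (2 / (s j * (u j) ^ (Nn j))) with hT
  have hT1 : ∀ j, 2 / ((d j/16) * (d j/16) ^ (Nn j)) ≤ T j := fun j => le_max_left _ _
  have hT2 : ∀ j, 2 / (s j * (u j) ^ (Nn j)) ≤ T j := fun j => le_max_right _ _
  have hT0 : ∀ j, 0 < T j := by
    intro j
    refine lt_of_lt_of_le ?_ (hT1 j)
    have := hd0 j
    positivity
  refine ⟨fun j => phi (d j) (T j) (Nn j), ?_, ?_, ?_, ?_⟩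
  · exact fun j => phi_diff (hT0 j)
  · intro j z hz
    obtain ⟨y, hy, hdy⟩ := phi_mem (hd0 j) (hd1 j) (hNd j) (hT1 j) (mem_ball_iff.mp hz)
    exact hdsub j (Metric.mem_thickening_iff.mpr ⟨y, hy, hdy⟩)
  · rw [tendstoLocallyUniformlyOn_iff_forall_isCompact isOpen_ball]
    intro K' hK'sub hK'c
    rcases K'.eq_empty_or_nonempty with rfl | hne
    · exact tendstoUniformlyOn_empty
    obtain ⟨z0, hz0K, hmax⟩ := hK'c.exists_isMaxOn hne
      (continuous_norm.continuousOn)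
    rw [isMaxOn_iff] at hmax
    have hr1 : ‖z0‖ < 1 := mem_ball_iff.mp (hK'sub hz0K)
    set r := ‖z0‖ with hr
    obtain ⟨J, hJ⟩ := exists_nat_gt (max (1/(1-r)) 0)
    rw [Metric.tendstoUniformlyOn_iff]
    intro ε hε
    obtain ⟨J2, hJ2⟩ := exists_nat_gt (1/ε)
    filter_upwards [eventually_ge_atTop (max J J2)] with j hj
    intro z hzK'
    have hjJ : J ≤ j := le_trans (le_max_left _ _) hj
    have hjJ2 : J2 ≤ j := le_trans (le_max_right _ _) hj
    have hzr : ‖z‖ ≤ r := hmax z hzK'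
    have hzb : ‖z‖ < 1 := lt_of_le_of_lt hzr hr1
    have hsj : s j ≤ 1 - r := by
      rw [hs]
      simp only
      have h1 : (1:ℝ)/(1-r) < J := lt_of_le_of_lt (le_max_left _ _) hJ
      have h2 : (J:ℝ) ≤ (j:ℝ) := by exact_mod_cast hjJ
      have hr0 : (0:ℝ) < 1 - r := by linarith
      rw [div_le_iff₀ (by positivity)]
      rw [div_lt_iff₀ hr0] at h1
      nlinarith [Nat.cast_nonneg (α := ℝ) j]
    have hq := qf_small hzb (hs0 j) (hu0 j) (hzr.trans (by linarith)) (hT2 j)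
    have hd := phi_dist (hd0 j) (hd1 j) hzb (hT0 j) (hu0 j) (hu2 j) hq (hNne j)
    rw [dist_comm] at hd
    calc dist (id z) (phi (d j) (T j) (Nn j) z) ≤ 3 * u j := hd
      _ < ε := by
        rw [hu]
        simp only
        have h2 : (J2:ℝ) ≤ (j:ℝ) := by exact_mod_cast hjJ2
        rw [div_lt_iff₀ hε] at hJ2
        rw [show (3:ℝ) * (1 / (3 * ((j:ℝ) + 1))) = 1 / ((j:ℝ)+1) by
          field_simp]
        rw [div_lt_iff₀ (by positivity)]
        nlinarith [hε]
  · intro j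
    obtain ⟨w, hw, hw2⟩ := phi_two (hd0 j) (hd1 j) (hT0 j) (hNne j)
    exact ⟨w, hw, hw2⟩
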